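/- Sufficiency of the dynamic programming equation for discrete Volterra control: if a function V satisfies V(i,β) = min_{ξ∈U} { V(i+1, β⊗ξ) + Φ(i, x(i;i,β), ξ) } for all 0 ≤ i ≤ N−1 and V(N,β) = Φ₀(x(N;N,β)), then V(i,β) = min over suffix controls u_{⟨i⟩} of J_{i,β}(u_{⟨i⟩}) for all i and β. -/

import Mathlib

/-- Solution of the discrete controlled Volterra equation
`x k = x₀ k + ∑_{j<k} φ k j (x j) (u j)`. -/
noncomputable def traj {E U : Type*} [AddCommGroup E]
    (x₀ : ℕ → E) (φ : ℕ → ℕ → E → U → E) (u : ℕ → U) : ℕ → E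
  | k => x₀ k + ∑ j : Fin k, φ k j (traj x₀ φ u j) (u j)
  termination_by k => k
  decreasing_by exact j.isLt

/-- Parametrized cost `J_{i,β}(γ)`: the trajectory uses the prefix control `β`
on indices `< i` and the suffix control `γ` on indices `≥ i`, and the costs
accumulated are `∑_{j=i}^{N-1} Φ(j, x(j), γ j) + Φ₀(x N)`. -/
noncomputable def Jcost {E U : Type*} [AddCommGroup E] (N : ℕ)
    (x₀ : ℕ → E) (φ : ℕ → ℕ → E → U → E) (Φ : ℕ → E → U → ℝ) (Φ₀ : E → ℝ)
    (i : ℕ) (β γ : ℕ → U) : ℝ :=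
  (∑ j ∈ Finset.Ico i N,
      Φ j (traj x₀ φ (fun k => if k < i then β k else γ k) j) (γ j)) +
    Φ₀ (traj x₀ φ (fun k => if k < i then β k else γ k) N)

lemma traj_congr {E U : Type*} [AddCommGroup E]
    (x₀ : ℕ → E) (φ : ℕ → ℕ → E → U → E) (u v : ℕ → U) :
    ∀ k, (∀ j < k, u j = v j) → traj x₀ φ u k = traj x₀ φ v k := by
  intro k
  induction k using Nat.strong_induction_on with
  | _ k ih =>
    intro h
    rw [traj, traj]
    congr 1
    apply Finset.sum_congr rfl
    intro j _
    rw [ih j j.isLt (fun m hm => h m (hm.trans j.isLt)), h j j.isLt]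

lemma Jcost_congr {E U : Type*} [AddCommGroup E] (N : ℕ)
    (x₀ : ℕ → E) (φ : ℕ → ℕ → E → U → E) (Φ : ℕ → E → U → ℝ) (Φ₀ : E → ℝ)
    (i : ℕ) (β γ γ' : ℕ → U) (h : ∀ j, i ≤ j → j < N → γ j = γ' j) :
    Jcost N x₀ φ Φ Φ₀ i β γ = Jcost N x₀ φ Φ Φ₀ i β γ' := by
  unfold Jcost
  have hc : ∀ j < N, (fun k => if k < i then β k else γ k) j
      = (fun k => if k < i then β k else γ' k) j := by
    intro j hj
    by_cases hji : j < i
    · simp [hji]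
    · simp [hji, h j (by omega) hj]
  congr 1
  · apply Finset.sum_congr rfl
    intro j hj
    rw [Finset.mem_Ico] at hj
    rw [traj_congr x₀ φ _ _ j (fun m hm => hc m (hm.trans hj.2)), h j hj.1 hj.2]
  · rw [traj_congr x₀ φ _ _ N hc]

lemma Jcost_range_finite {E U : Type*} [AddCommGroup E] [Fintype U] [Nonempty U] (N : ℕ)
    (x₀ : ℕ → E) (φ : ℕ → ℕ → E → U → E) (Φ : ℕ → E → U → ℝ) (Φ₀ : E → ℝ)
    (i : ℕ) (β : ℕ → U) :
    (Set.range (fun γ : ℕ → U => Jcost N x₀ φ Φ Φ₀ i β γ)).Finite := by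
  classical
  apply Set.Finite.subset (Set.finite_range
    (fun h : Fin N → U => Jcost N x₀ φ Φ Φ₀ i β
      (fun k => if hk : k < N then h ⟨k, hk⟩ else Classical.arbitrary U)))
  rintro _ ⟨γ, rfl⟩
  refine ⟨fun j => γ j, ?_⟩
  apply Jcost_congr
  intro j _ hj2
  simp [hj2]

lemma exists_eq_ciInf_of_finite_range {α : Type*} [Nonempty α] (f : α → ℝ)
    (hf : (Set.range f).Finite) : ∃ a, f a = ⨅ x, f x := by
  obtain ⟨a, ha⟩ := (Set.range_nonempty f).csInf_mem hf
  exact ⟨a, ha⟩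

lemma Jcost_step {E U : Type*} [AddCommGroup E] (N : ℕ)
    (x₀ : ℕ → E) (φ : ℕ → ℕ → E → U → E) (Φ : ℕ → E → U → ℝ) (Φ₀ : E → ℝ)
    {i : ℕ} (hiN : i < N) (β γ : ℕ → U) :
    Jcost N x₀ φ Φ Φ₀ i β γ =
      Jcost N x₀ φ Φ Φ₀ (i + 1) (Function.update β i (γ i)) γ
        + Φ i (traj x₀ φ β i) (γ i) := by
  classical
  unfold Jcost
  have hu : (fun k => if k < i then β k else γ k)
      = (fun k => if k < i + 1 then Function.update β i (γ i) k else γ k) := by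
    funext k
    rcases lt_trichotomy k i with h | h | h
    · simp [h, Nat.lt_succ_of_lt h, Function.update_of_ne (Nat.ne_of_lt h)]
    · subst h; simp
    · have h1 : ¬ k < i := by omega
      have h2 : ¬ k < i + 1 := by omega
      simp [h1, h2]
  rw [hu, Finset.sum_eq_sum_Ico_succ_bot hiN]
  have ht : traj x₀ φ (fun k => if k < i + 1 then Function.update β i (γ i) k else γ k) i
      = traj x₀ φ β i := by
    apply traj_congr
    intro j hj
    simp only [show j < i + 1 by omega, if_true]
    exact Function.update_of_ne (Nat.ne_of_lt hj) _ _
  rw [ht]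
  ring

/-- Sufficiency of the dynamic programming equation for discrete Volterra
control (Theorem 2.2, first assertion): if `V` satisfies the recursion
`V i β = min_ξ { V (i+1) (β⊗ξ) + Φ(i, x(i;i,β), ξ) }` for `i < N` together
with the terminal condition `V N β = Φ₀(x(N;N,β))`, then
`V i β = min over suffix controls γ of J_{i,β}(γ)` for all `i ≤ N` and `β`. -/
theorem stmt7 {E U : Type*} [AddCommGroup E] [Fintype U] [Nonempty U] (N : ℕ)
    (x₀ : ℕ → E) (φ : ℕ → ℕ → E → U → E) (Φ : ℕ → E → U → ℝ) (Φ₀ : E → ℝ)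
    (V : ℕ → (ℕ → U) → ℝ)
    (hterm : ∀ β : ℕ → U, V N β = Φ₀ (traj x₀ φ β N))
    (hrec : ∀ i < N, ∀ β : ℕ → U,
      V i β = ⨅ ξ : U, (V (i + 1) (Function.update β i ξ) +
        Φ i (traj x₀ φ β i) ξ)) :
    ∀ i ≤ N, ∀ β : ℕ → U,
      V i β = ⨅ γ : ℕ → U, Jcost N x₀ φ Φ Φ₀ i β γ := by
  classical
  suffices H : ∀ k i, i + k = N → ∀ β : ℕ → U,
      V i β = ⨅ γ : ℕ → U, Jcost N x₀ φ Φ Φ₀ i β γ by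
    intro i hi β; exact H (N - i) i (by omega) β
  intro k
  induction k with
  | zero =>
    intro i hik β
    have hconst : ∀ γ : ℕ → U, Jcost N x₀ φ Φ Φ₀ i β γ = Φ₀ (traj x₀ φ β N) := by
      intro γ
      unfold Jcost
      have he : Finset.Ico i N = ∅ := by rw [Finset.Ico_eq_empty_iff]; omega
      rw [he, Finset.sum_empty, zero_add]
      congr 1
      exact traj_congr x₀ φ _ β N (fun j hj => by simp [show j < i by omega])
    simp only [hconst]
    rw [ciInf_const, show i = N by omega]
    exact hterm β
  | succ k ih =>
    intro i hik β
    have hiN : i < N := by omega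
    have hVi : ∀ ξ : U, V (i + 1) (Function.update β i ξ)
        = ⨅ γ : ℕ → U, Jcost N x₀ φ Φ Φ₀ (i + 1) (Function.update β i ξ) γ :=
      fun ξ => ih (i + 1) (by omega) _
    rw [hrec i hiN β]
    apply le_antisymm
    · apply le_ciInf
      intro γ
      have hb : BddBelow (Set.range fun ξ : U =>
          V (i + 1) (Function.update β i ξ) + Φ i (traj x₀ φ β i) ξ) :=
        (Set.finite_range _).bddBelow
      calc (⨅ ξ : U, (V (i + 1) (Function.update β i ξ) + Φ i (traj x₀ φ β i) ξ))
          ≤ V (i + 1) (Function.update β i (γ i)) + Φ i (traj x₀ φ β i) (γ i) :=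
            ciInf_le hb (γ i)
        _ ≤ Jcost N x₀ φ Φ Φ₀ (i + 1) (Function.update β i (γ i)) γ
              + Φ i (traj x₀ φ β i) (γ i) := by
            apply add_le_add_left
            rw [hVi]
            exact ciInf_le (Jcost_range_finite N x₀ φ Φ Φ₀ (i + 1) _).bddBelow γ
        _ = Jcost N x₀ φ Φ Φ₀ i β γ := (Jcost_step N x₀ φ Φ Φ₀ hiN β γ).symm
    · apply le_ciInf
      intro ξ
      obtain ⟨γ₀, hγ₀⟩ := exists_eq_ciInf_of_finite_range
        (fun γ : ℕ → U => Jcost N x₀ φ Φ Φ₀ (i + 1) (Function.update β i ξ) γ)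
        (Jcost_range_finite N x₀ φ Φ Φ₀ (i + 1) _)
      set γ₁ := Function.update γ₀ i ξ with hγ₁
      have h1 : Jcost N x₀ φ Φ Φ₀ i β γ₁
          = Jcost N x₀ φ Φ Φ₀ (i + 1) (Function.update β i ξ) γ₀
            + Φ i (traj x₀ φ β i) ξ := by
        rw [Jcost_step N x₀ φ Φ Φ₀ hiN β γ₁]
        have hξ : γ₁ i = ξ := Function.update_self i ξ γ₀
        rw [hξ]
        congr 1
        apply Jcost_congr
        intro j hj1 _
        exact Function.update_of_ne (by omega) _ _
      calc (⨅ γ : ℕ → U, Jcost N x₀ φ Φ Φ₀ i β γ)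
          ≤ Jcost N x₀ φ Φ Φ₀ i β γ₁ :=
            ciInf_le (Jcost_range_finite N x₀ φ Φ Φ₀ i β).bddBelow γ₁
        _ = Jcost N x₀ φ Φ Φ₀ (i + 1) (Function.update β i ξ) γ₀
              + Φ i (traj x₀ φ β i) ξ := h1
        _ = (⨅ γ : ℕ → U, Jcost N x₀ φ Φ Φ₀ (i + 1) (Function.update β i ξ) γ)
              + Φ i (traj x₀ φ β i) ξ := by rw [hγ₀]
        _ = V (i + 1) (Function.update β i ξ) + Φ i (traj x₀ φ β i) ξ := by
              rw [hVi]
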